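/- For all integers n ≥ 1, k ≥ 2 and j ≥ 1, the natural number n divides j·C(kn, n+j); that is, (j/n)·C(kn, n+j) is always an integer. -/

import Mathlib

/-- For all integers n ≥ 1, k ≥ 2 and j ≥ 1, n divides j·C(kn, n+j);
that is, (j/n)·C(kn, n+j) is always an integer. -/
theorem stmt_1 (n k j : ℕ) (hn : 1 ≤ n) (hk : 2 ≤ k) (hj : 1 ≤ j) :
    n ∣ j * Nat.choose (k * n) (n + j) := by
  have key : n ∣ (n + j) * Nat.choose (k * n) (n + j) := by
    have hkn : 1 ≤ k * n := le_trans hn (Nat.le_mul_of_pos_left n (show 0 < k by omega))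
    rcases Nat.exists_eq_add_of_le hkn with ⟨m, hm⟩
    rcases Nat.exists_eq_add_of_le (by omega : 1 ≤ n + j) with ⟨p, hp⟩
    rw [hm, hp, mul_comm, Nat.add_comm 1 m, Nat.add_comm 1 p, ← Nat.add_one_mul_choose_eq]
    rw [Nat.add_comm 1 m] at hm
    exact Dvd.dvd.mul_right (by rw [← hm]; exact Dvd.intro_left k rfl) _
  have h2 : n ∣ n * Nat.choose (k * n) (n + j) := Dvd.intro _ rfl
  have := Nat.dvd_sub key h2
  rwa [add_mul, Nat.add_sub_cancel_left] at this
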